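/- Let S and T be simple, locally finite hypergraphs. If there is a graph isomorphism from some connected component Γ_S(s) of Γ_S to some connected component Γ_T(t) of Γ_T, then the hypergraphs S and T are isomorphic. -/

import Mathlib

open scoped symmDiff

variable {V : Type*}

def Indep (E : Set (Finset V)) (s : Set V) : Prop := ∀ e ∈ E, ¬ ((e : Set V) ⊆ s)

def SimpleHG (E : Set (Finset V)) : Prop :=
  (∀ e ∈ E, 1 < e.card) ∧ ∀ e ∈ E, ∀ e' ∈ E, e ⊆ e' → e = e'

def LocFin (E : Set (Finset V)) : Prop := ∀ v : V, {e ∈ E | v ∈ e}.Finite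

def Nbr (E : Set (Finset V)) (v w : V) : Prop := ∃ e ∈ E, v ∈ e ∧ w ∈ e

def Gamma (E : Set (Finset V)) : SimpleGraph {s : Set V // Indep E s} where
  Adj s t := ∃ v, s.1 ∆ t.1 = {v}
  symm := ⟨fun s t ⟨v, h⟩ => ⟨v, by rwa [symmDiff_comm]⟩⟩
  loopless := ⟨fun s ⟨v, h⟩ => by
    rw [symmDiff_self] at h
    exact absurd h.symm (Set.singleton_ne_empty v)⟩

def Comp (E : Set (Finset V)) (s : Set V) : Set {t : Set V // Indep E t} :=
  {t | (s ∆ t.1).Finite}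

def GammaComp (E : Set (Finset V)) (s : Set V) : SimpleGraph (Comp E s) :=
  (Gamma E).induce (Comp E s)

def xset (E : Set (Finset V)) (s : Set V) (v : V) : Set V :=
  s \ insert v {w | Nbr E v w}

def yset (E : Set (Finset V)) (s : Set V) (v : V) : Set V :=
  insert v (xset E s v)

def IsIsoHG {V W : Type*} (ES : Set (Finset V)) (ET : Set (Finset W)) (f : V → W) : Prop :=
  Function.Bijective f ∧ ∀ e : Finset V, e ∈ ES ↔ ∃ e' ∈ ET, (e' : Set W) = f '' (e : Set V)

/-! ### Basic lemmas -/

lemma indep_mono {E : Set (Finset V)} {a b : Set V} (h : Indep E a) (hba : b ⊆ a) :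
    Indep E b := fun e he hsub => h e he (hsub.trans hba)

lemma nbr_finite {E : Set (Finset V)} (hlf : LocFin E) (v : V) : {w | Nbr E v w}.Finite := by
  have hsub : {w | Nbr E v w} ⊆ ⋃ e ∈ {e ∈ E | v ∈ e}, (e : Set V) := by
    rintro w ⟨e, he, hv, hw⟩
    exact Set.mem_biUnion ⟨he, hv⟩ hw
  exact (Set.Finite.biUnion (hlf v) (fun e _ => e.finite_toSet)).subset hsub

lemma symmDiff_singleton_of_mem {X : Set V} {v : V} (h : v ∈ X) : X ∆ {v} = X \ {v} := by
  ext z; simp only [Set.mem_symmDiff, Set.mem_singleton_iff, Set.mem_diff]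
  constructor
  · rintro (⟨h1, h2⟩ | ⟨h1, h2⟩)
    · exact ⟨h1, h2⟩
    · exact absurd (h1 ▸ h) h2
  · rintro ⟨h1, h2⟩; exact Or.inl ⟨h1, h2⟩

lemma symmDiff_singleton_of_not_mem {X : Set V} {v : V} (h : v ∉ X) : X ∆ {v} = X ∪ {v} := by
  ext z; simp only [Set.mem_symmDiff, Set.mem_singleton_iff, Set.mem_union]
  constructor
  · rintro (⟨h1, h2⟩ | ⟨h1, h2⟩)
    · exact Or.inl h1
    · exact Or.inr h1
  · rintro (h1 | h1)
    · exact Or.inl ⟨h1, fun hz => h (hz ▸ h1)⟩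
    · exact Or.inr ⟨h1, h1 ▸ h⟩

lemma eq_symmDiff_of_symmDiff_eq {X Y Z : Set V} (h : X ∆ Y = Z) : Y = X ∆ Z := by
  rw [← h, symmDiff_symmDiff_cancel_left]

lemma symmDiff_union_singleton {X : Set V} {v : V} (h : v ∉ X) : X ∆ (X ∪ {v}) = {v} := by
  rw [← symmDiff_singleton_of_not_mem h, symmDiff_symmDiff_cancel_left]

lemma union_singleton_symmDiff {X Y : Set V} {v : V} (hx : v ∉ X) (hy : v ∉ Y) :
    (X ∪ {v}) ∆ (Y ∪ {v}) = X ∆ Y := by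
  ext z; simp only [Set.mem_symmDiff, Set.mem_union, Set.mem_singleton_iff]
  by_cases hz : z = v
  · subst hz; simp [hx, hy]
  · simp [hz]

/-! ### xset / yset -/

lemma not_mem_xset {E : Set (Finset V)} {s : Set V} (v : V) : v ∉ xset E s v :=
  fun h => h.2 (Set.mem_insert v _)

lemma xset_indep {E : Set (Finset V)} {s : Set V} (hs : Indep E s) (v : V) :
    Indep E (xset E s v) := indep_mono hs Set.diff_subset

lemma yset_eq {E : Set (Finset V)} {s : Set V} (v : V) :
    yset E s v = xset E s v ∪ {v} := by
  rw [yset, Set.union_singleton]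

lemma yset_indep {E : Set (Finset V)} {s : Set V}
    (hcard : ∀ e ∈ E, 1 < e.card) (hs : Indep E s) (v : V) : Indep E (yset E s v) := by
  intro e he hsub
  by_cases hv : v ∈ e
  · obtain ⟨w, hw, hwv⟩ := Finset.exists_mem_ne (hcard e he) v
    have hwy : w ∈ yset E s v := hsub hw
    rcases hwy with hwy | hwy
    · exact hwv hwy
    · exact hwy.2 (Set.mem_insert_of_mem _ ⟨e, he, hv, hw⟩)
  · have : (e : Set V) ⊆ xset E s v := by
      intro z hz
      rcases hsub hz with h1 | h1
      · exact absurd (h1 ▸ hz) hv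
      · exact h1
    exact xset_indep hs v e he this

lemma xset_comp {E : Set (Finset V)} {s : Set V} (hlf : LocFin E) (v : V) :
    (s ∆ xset E s v).Finite := by
  have h1 : s ∆ xset E s v ⊆ insert v {w | Nbr E v w} := by
    intro z hz
    rcases Set.mem_symmDiff.mp hz with ⟨h1, h2⟩ | ⟨h1, h2⟩
    · by_contra hn; exact h2 ⟨h1, hn⟩
    · exact absurd h1.1 h2
  exact (((nbr_finite hlf v).insert v).subset h1)

lemma yset_comp {E : Set (Finset V)} {s : Set V} (hlf : LocFin E) (v : V) :
    (s ∆ yset E s v).Finite := by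
  have := symmDiff_triangle s (xset E s v) (yset E s v)
  have h2 : xset E s v ∆ yset E s v = {v} := by
    rw [yset_eq]; exact symmDiff_union_singleton (not_mem_xset v)
  refine Set.Finite.subset ?_ this
  rw [h2]
  exact (xset_comp hlf v).union (Set.finite_singleton v)

lemma diff_singleton_symmDiff {a b : Set V} {w : V} (h1 : w ∈ a) (h2 : w ∉ b) :
    (a \ {w}) ∆ b = (a ∆ b) \ {w} := by
  ext z
  by_cases hz : z = w
  · subst hz; simp [Set.mem_symmDiff, h1, h2]
  · simp only [Set.mem_symmDiff, Set.mem_diff, Set.mem_singleton_iff, hz]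
    tauto

lemma union_singleton_symmDiff_right {a b : Set V} {w : V} (h1 : w ∉ a) (h2 : w ∈ b) :
    (a ∪ {w}) ∆ b = (a ∆ b) \ {w} := by
  ext z
  by_cases hz : z = w
  · subst hz; simp [Set.mem_symmDiff, h1, h2]
  · simp only [Set.mem_symmDiff, Set.mem_union, Set.mem_diff, Set.mem_singleton_iff, hz]
    tauto

def StepR (Q : Set V → Prop) (x y : Set V) : Prop :=
  Q y ∧ ∃ w, y = x ∆ {w}

lemma reach_aux {Q : Set V → Prop} :
    ∀ (n : ℕ) (a b : Set V), (a ∆ b).Finite → (a ∆ b).ncard ≤ n →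
    (∀ x, a ∩ b ⊆ x → (x ⊆ a ∨ x ⊆ b) → Q x) →
    Relation.ReflTransGen (StepR Q) a b := by
  intro n
  induction n with
  | zero =>
    intro a b hfin hcard _
    have h0 : (a ∆ b).ncard = 0 := Nat.le_zero.mp hcard
    rw [Set.ncard_eq_zero hfin] at h0
    have hab : a = b := symmDiff_eq_bot.mp h0
    exact hab ▸ Relation.ReflTransGen.refl
  | succ n ih =>
    intro a b hfin hcard hQ
    by_cases hab : a = b
    · exact hab ▸ Relation.ReflTransGen.refl
    · by_cases hd : (a \ b).Nonempty
      · obtain ⟨w, hwa, hwb⟩ := hd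
        set y := a \ {w} with hy
        have hy_eq : y = a ∆ {w} := (symmDiff_singleton_of_mem hwa).symm
        have hyb : y ∆ b = (a ∆ b) \ {w} := diff_singleton_symmDiff hwa hwb
        have hwab : w ∈ a ∆ b := Or.inl ⟨hwa, hwb⟩
        have hfin' : (y ∆ b).Finite := by rw [hyb]; exact hfin.diff
        have hcard' : (y ∆ b).ncard ≤ n := by
          rw [hyb]
          have := Set.ncard_diff_singleton_lt_of_mem hwab hfin
          omega
        have hQ' : ∀ x, y ∩ b ⊆ x → (x ⊆ y ∨ x ⊆ b) → Q x := by
          intro x h1 h2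
          refine hQ x (fun z hz => h1 ⟨⟨hz.1, fun h => hwb (h ▸ hz.2)⟩, hz.2⟩)
            (h2.elim (fun h => Or.inl (h.trans Set.diff_subset)) Or.inr)
        have step : StepR Q a y :=
          ⟨hQ y (fun z hz => ⟨hz.1, fun h => hwb (h ▸ hz.2)⟩) (Or.inl Set.diff_subset),
            w, hy_eq⟩
        exact Relation.ReflTransGen.head step (ih y b hfin' hcard' hQ')
      · have hsub : a ⊆ b := by
          intro z hz
          by_contra hzb
          exact hd ⟨z, hz, hzb⟩
        have hd' : (b \ a).Nonempty := by
          rcases Set.eq_empty_or_nonempty (b \ a) with he | he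
          · exact absurd (Set.Subset.antisymm hsub (fun z hz => by
              by_contra hza
              exact absurd ⟨hz, hza⟩ (he ▸ Set.notMem_empty z))) hab
          · exact he
        obtain ⟨w, hwb, hwa⟩ := hd'
        set y := a ∪ {w} with hy
        have hy_eq : y = a ∆ {w} := (symmDiff_singleton_of_not_mem hwa).symm
        have hyb : y ∆ b = (a ∆ b) \ {w} := union_singleton_symmDiff_right hwa hwb
        have hwab : w ∈ a ∆ b := Or.inr ⟨hwb, hwa⟩
        have hfin' : (y ∆ b).Finite := by rw [hyb]; exact hfin.diff
        have hcard' : (y ∆ b).ncard ≤ n := by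
          rw [hyb]
          have := Set.ncard_diff_singleton_lt_of_mem hwab hfin
          omega
        have hysub : y ⊆ b := Set.union_subset hsub (by simpa using hwb)
        have hQ' : ∀ x, y ∩ b ⊆ x → (x ⊆ y ∨ x ⊆ b) → Q x := by
          intro x h1 h2
          refine hQ x (fun z hz => h1 ⟨Or.inl hz.1, hz.2⟩)
            (Or.inr (h2.elim (fun h => h.trans hysub) id))
        have step : StepR Q a y :=
          ⟨hQ y (fun z hz => Or.inl hz.1) (Or.inr hysub), w, hy_eq⟩
        exact Relation.ReflTransGen.head step (ih y b hfin' hcard' hQ')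

lemma reach {Q : Set V → Prop} (a b : Set V) (hfin : (a ∆ b).Finite)
    (hQ : ∀ x, a ∩ b ⊆ x → (x ⊆ a ∨ x ⊆ b) → Q x) :
    Relation.ReflTransGen (StepR Q) a b :=
  reach_aux (a ∆ b).ncard a b hfin le_rfl hQ

/-! ### More helpers -/

lemma symmDiff_chain {α : Type*} (a b c : Set α) : (a ∆ b) ∆ (b ∆ c) = a ∆ c := by
  rw [symmDiff_assoc, symmDiff_symmDiff_cancel_left]

lemma symmDiff_right_cancel' {α : Type*} {a b c : Set α} (h : a ∆ b = a ∆ c) : b = c := by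
  have h1 := eq_symmDiff_of_symmDiff_eq h
  rwa [symmDiff_symmDiff_cancel_left] at h1

lemma singleton_symmDiff_singleton_of_ne {α : Type*} {p q : α} (h : p ≠ q) :
    ({p} : Set α) ∆ {q} = {p, q} := by
  ext z
  simp only [Set.mem_symmDiff, Set.mem_singleton_iff, Set.mem_insert_iff]
  constructor
  · rintro (⟨h1, _⟩ | ⟨h1, _⟩)
    · exact Or.inl h1
    · exact Or.inr h1
  · rintro (h1 | h1)
    · exact Or.inl ⟨h1, fun hz => h (h1 ▸ hz ▸ rfl)⟩
    · exact Or.inr ⟨h1, fun hz => h (hz ▸ h1 ▸ rfl)⟩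

lemma between_symmDiff {α : Type*} {a b z s : Set α} (h1 : a ∩ b ⊆ z) (h2 : z ⊆ a ∪ b) :
    s ∆ z ⊆ (s ∆ a) ∪ (s ∆ b) := by
  intro u hu
  rcases Set.mem_symmDiff.mp hu with ⟨hus, huz⟩ | ⟨huz, hus⟩
  · by_cases hua : u ∈ a
    · by_cases hub : u ∈ b
      · exact absurd (h1 ⟨hua, hub⟩) huz
      · exact Or.inr (Set.mem_symmDiff.mpr (Or.inl ⟨hus, hub⟩))
    · exact Or.inl (Set.mem_symmDiff.mpr (Or.inl ⟨hus, hua⟩))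
  · rcases h2 huz with hua | hub
    · exact Or.inl (Set.mem_symmDiff.mpr (Or.inr ⟨hua, hus⟩))
    · exact Or.inr (Set.mem_symmDiff.mpr (Or.inr ⟨hub, hus⟩))

section Main

variable {W : Type*} {E : Set (Finset V)} {E' : Set (Finset W)} {s : Set V} {t : Set W}

/-- Build an element of the component. -/
def mkC (X : Set V) (h1 : Indep E X) (h2 : (s ∆ X).Finite) : ↥(Comp E s) := ⟨⟨X, h1⟩, h2⟩

lemma mkC_val (X : Set V) (h1 : Indep E X) (h2 : (s ∆ X).Finite) :
    (mkC X h1 h2 : ↥(Comp E s)).1.1 = X := rfl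

lemma compEq {a b : ↥(Comp E s)} (h : a.1.1 = b.1.1) : a = b :=
  Subtype.ext (Subtype.ext h)

lemma comp_union_singleton {x : Set V} (v : V) (hvx : v ∉ x) (h : (s ∆ x).Finite) :
    (s ∆ (x ∪ {v})).Finite := by
  refine Set.Finite.subset (h.union (Set.finite_singleton v)) ?_
  have := symmDiff_triangle s x (x ∪ {v})
  rwa [symmDiff_union_singleton hvx] at this

lemma adj_image (φ : GammaComp E s ≃g GammaComp E' t) {a b : ↥(Comp E s)}
    (hab : ∃ v, a.1.1 ∆ b.1.1 = {v}) : ∃ w, (φ a).1.1 ∆ (φ b).1.1 = {w} :=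
  (φ.map_rel_iff (a := a) (b := b)).mpr hab

def xC (hlf : LocFin E) (hs : Indep E s) (v : V) : ↥(Comp E s) :=
  ⟨⟨xset E s v, xset_indep hs v⟩, xset_comp hlf v⟩

def yC (hcard : ∀ e ∈ E, 1 < e.card) (hlf : LocFin E) (hs : Indep E s) (v : V) :
    ↥(Comp E s) :=
  ⟨⟨yset E s v, yset_indep hcard hs v⟩, yset_comp hlf v⟩

lemma xC_adj_yC (hcard : ∀ e ∈ E, 1 < e.card) (hlf : LocFin E) (hs : Indep E s) (v : V) :
    (xC hlf hs v).1.1 ∆ (yC hcard hlf hs v).1.1 = {v} := by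
  show xset E s v ∆ yset E s v = {v}
  rw [yset_eq]
  exact symmDiff_union_singleton (not_mem_xset v)

noncomputable def flab (hcard : ∀ e ∈ E, 1 < e.card) (hlf : LocFin E) (hs : Indep E s)
    (φ : GammaComp E s ≃g GammaComp E' t) (v : V) : W :=
  (adj_image φ ⟨v, xC_adj_yC hcard hlf hs v⟩).choose

lemma flab_spec (hcard : ∀ e ∈ E, 1 < e.card) (hlf : LocFin E) (hs : Indep E s)
    (φ : GammaComp E s ≃g GammaComp E' t) (v : V) :
    (φ (xC hlf hs v)).1.1 ∆ (φ (yC hcard hlf hs v)).1.1 = {flab hcard hlf hs φ v} :=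
  (adj_image φ ⟨v, xC_adj_yC hcard hlf hs v⟩).choose_spec

lemma label_step (φ : GammaComp E s ≃g GammaComp E' t) {v : V} {x y : Set V}
    (hx : Indep E x) (hx' : Indep E (x ∪ {v})) (hvx : v ∉ x) (hcx : (s ∆ x).Finite)
    (hy : Indep E y) (hy' : Indep E (y ∪ {v})) (hvy : v ∉ y) (hcy : (s ∆ y).Finite)
    {w : V} (hwv : w ≠ v) (hxy : y = x ∆ {w}) {p : W}
    (hp : (φ (mkC x hx hcx)).1.1 ∆ (φ (mkC (x ∪ {v}) hx' (comp_union_singleton v hvx hcx))).1.1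
      = {p}) :
    (φ (mkC y hy hcy)).1.1 ∆ (φ (mkC (y ∪ {v}) hy' (comp_union_singleton v hvy hcy))).1.1
      = {p} := by
  set X := mkC (E := E) (s := s) x hx hcx with hX
  set X' := mkC (E := E) (s := s) (x ∪ {v}) hx' (comp_union_singleton v hvx hcx) with hX'
  set Y := mkC (E := E) (s := s) y hy hcy with hY
  set Y' := mkC (E := E) (s := s) (y ∪ {v}) hy' (comp_union_singleton v hvy hcy) with hY'
  have hXY : X.1.1 ∆ Y.1.1 = {w} := by
    show x ∆ y = {w}
    rw [hxy, symmDiff_symmDiff_cancel_left]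
  have hX'Y' : X'.1.1 ∆ Y'.1.1 = {w} := by
    show (x ∪ {v}) ∆ (y ∪ {v}) = {w}
    rw [union_singleton_symmDiff hvx hvy]
    rw [hxy, symmDiff_symmDiff_cancel_left]
  obtain ⟨q, hq⟩ := adj_image φ (a := Y) (b := Y') ⟨v, by
    show y ∆ (y ∪ {v}) = {v}
    exact symmDiff_union_singleton hvy⟩
  obtain ⟨r, hr⟩ := adj_image φ (a := X) (b := Y) ⟨w, hXY⟩
  obtain ⟨r', hr'⟩ := adj_image φ (a := X') (b := Y') ⟨w, hX'Y'⟩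
  -- telescope identities
  have key : ({p} : Set W) ∆ {r'} = {r} ∆ {q} := by
    have e1 : ({p} : Set W) ∆ {r'} = (φ X).1.1 ∆ (φ Y').1.1 := by
      rw [← hp, ← hr']; exact symmDiff_chain _ _ _
    have e2 : ({r} : Set W) ∆ {q} = (φ X).1.1 ∆ (φ Y').1.1 := by
      rw [← hr, ← hq]; exact symmDiff_chain _ _ _
    rw [e1, e2]
  have hpr : p ≠ r := by
    intro hpr
    subst hpr
    have : (φ X').1.1 = (φ Y).1.1 := symmDiff_right_cancel' (hp.trans hr.symm)
    have hXY' : X' = Y := φ.injective (compEq this)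
    have : v ∈ Y.1.1 := by
      rw [← hXY']
      exact Or.inr rfl
    exact hvy this
  have hqr : q ≠ r → p = q := by
    intro hqr
    by_cases hpr' : p = r'
    · subst hpr'
      rw [symmDiff_self] at key
      have : ({r} : Set W) = {q} := symmDiff_eq_bot.mp key.symm
      exact absurd (Set.singleton_eq_singleton_iff.mp this).symm hqr
    · rw [singleton_symmDiff_singleton_of_ne hpr',
        singleton_symmDiff_singleton_of_ne (Ne.symm hqr)] at key
      have hpmem : p ∈ ({r, q} : Set W) := key ▸ Set.mem_insert p {r'}
      rcases hpmem with h1 | h1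
      · exact absurd h1 hpr
      · exact h1
  by_cases hqr' : q = r
  · exfalso
    subst hqr'
    have h1 : (φ Y).1.1 ∆ (φ Y').1.1 = (φ Y).1.1 ∆ (φ X).1.1 := by
      rw [hq, symmDiff_comm (φ X).1.1 (φ Y).1.1] at *
      rw [hq, ← hr, symmDiff_comm]
    have : (φ Y').1.1 = (φ X).1.1 := symmDiff_right_cancel' h1
    have hYX : Y' = X := φ.injective (compEq this)
    have : v ∈ X.1.1 := by
      rw [← hYX]
      exact Or.inr rfl
    exact hvx this
  · rw [hq, hqr hqr']

lemma label_const (hcard : ∀ e ∈ E, 1 < e.card) (hlf : LocFin E) (hs : Indep E s)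
    (φ : GammaComp E s ≃g GammaComp E' t) (v : V) (x : Set V) (hx : Indep E x)
    (hx' : Indep E (x ∪ {v})) (hvx : v ∉ x) (hcx : (s ∆ x).Finite) :
    (φ (mkC x hx hcx)).1.1 ∆ (φ (mkC (x ∪ {v}) hx' (comp_union_singleton v hvx hcx))).1.1
      = {flab hcard hlf hs φ v} := by
  classical
  set a := xset E s v with ha
  set Q : Set V → Prop := fun z => Indep E z ∧ Indep E (z ∪ {v}) ∧ v ∉ z ∧ (s ∆ z).Finite
    with hQdef
  have hfin : (a ∆ x).Finite := by
    have h1 := symmDiff_triangle a s x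
    rw [symmDiff_comm a s] at h1
    exact ((xset_comp (s := s) hlf v).union hcx).subset h1
  have hya : a ∪ {v} = yset E s v := (yset_eq v).symm
  have hQ : ∀ z, a ∩ x ⊆ z → (z ⊆ a ∨ z ⊆ x) → Q z := by
    intro z h1 h2
    have hzu : z ⊆ a ∪ x := h2.elim (fun h => h.trans Set.subset_union_left)
      (fun h => h.trans Set.subset_union_right)
    refine ⟨?_, ?_, ?_, ?_⟩
    · exact h2.elim (fun h => indep_mono (xset_indep hs v) h) (fun h => indep_mono hx h)
    · rcases h2 with h | h
      · refine indep_mono (yset_indep hcard hs v) ?_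
        rw [← hya]
        exact Set.union_subset_union_left _ h
      · exact indep_mono hx' (Set.union_subset_union_left _ h)
    · rcases h2 with h | h
      · exact fun hz => not_mem_xset v (h hz)
      · exact fun hz => hvx (h hz)
    · exact Set.Finite.subset ((xset_comp hlf v).union hcx) (between_symmDiff h1 hzu)
  have hreach := reach (Q := Q) a x hfin hQ
  set P : Set V → Prop := fun z =>
    Q z ∧ ∀ (h1 : Indep E z) (h2 : Indep E (z ∪ {v})) (h3 : v ∉ z) (h4 : (s ∆ z).Finite),
      (φ (mkC z h1 h4)).1.1 ∆ (φ (mkC (z ∪ {v}) h2 (comp_union_singleton v h3 h4))).1.1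
        = {flab hcard hlf hs φ v} with hPdef
  have hQa : Q a := hQ a Set.inter_subset_left (Or.inl subset_rfl)
  have hPx : P x := by
    clear hx hx' hvx hcx hfin hQ
    induction hreach with
    | refl =>
      refine ⟨hQa, ?_⟩
      intro h1 h2 h3 h4
      have e1 : (mkC a h1 h4 : ↥(Comp E s)) = xC hlf hs v := compEq rfl
      have e2 : (mkC (a ∪ {v}) h2 (comp_union_singleton v h3 h4) : ↥(Comp E s))
          = yC hcard hlf hs v := compEq hya
      rw [e1, e2]
      exact flab_spec hcard hlf hs φ v
    | @tail b c hchain hstep ih =>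
      obtain ⟨hQc, w, hc_eq⟩ := hstep
      obtain ⟨hQb, hPb⟩ := ih
      refine ⟨hQc, ?_⟩
      intro h1 h2 h3 h4
      have hbc : b ∆ c = {w} := by rw [hc_eq, symmDiff_symmDiff_cancel_left]
      have hwv : w ≠ v := by
        intro hwv
        subst hwv
        have hmem : w ∈ b ∆ c := hbc ▸ rfl
        rcases Set.mem_symmDiff.mp hmem with hm | hm
        · exact hQb.2.2.1 hm.1
        · exact hQc.2.2.1 hm.1
      exact label_step φ hQb.1 hQb.2.1 hQb.2.2.1 hQb.2.2.2
        h1 h2 h3 h4 hwv hc_eq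
        (hPb hQb.1 hQb.2.1 hQb.2.2.1 hQb.2.2.2)
  exact hPx.2 hx hx' hvx hcx

lemma edge_label (hcard : ∀ e ∈ E, 1 < e.card) (hlf : LocFin E) (hs : Indep E s)
    (φ : GammaComp E s ≃g GammaComp E' t) {a b : ↥(Comp E s)} {v : V}
    (hab : a.1.1 ∆ b.1.1 = {v}) :
    (φ a).1.1 ∆ (φ b).1.1 = {flab hcard hlf hs φ v} := by
  have hb_eq : b.1.1 = a.1.1 ∆ {v} := eq_symmDiff_of_symmDiff_eq hab
  by_cases hv : v ∈ a.1.1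
  · have hvb : v ∉ b.1.1 := by
      rw [hb_eq, symmDiff_singleton_of_mem hv]
      exact fun h => h.2 rfl
    have hba : b.1.1 ∪ {v} = a.1.1 := by
      rw [hb_eq, symmDiff_singleton_of_mem hv, Set.diff_union_self]
      exact Set.union_eq_self_of_subset_right (by simpa using hv)
    have hx' : Indep E (b.1.1 ∪ {v}) := by rw [hba]; exact a.1.2
    have h := label_const hcard hlf hs φ v b.1.1 b.1.2 hx' hvb b.2
    have e1 : (mkC b.1.1 b.1.2 b.2 : ↥(Comp E s)) = b := compEq rfl
    have e2 : (mkC (b.1.1 ∪ {v}) hx' (comp_union_singleton v hvb b.2) : ↥(Comp E s)) = a :=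
      compEq hba
    rw [e1, e2] at h
    rw [symmDiff_comm]
    exact h
  · have hab' : a.1.1 ∪ {v} = b.1.1 := by
      rw [hb_eq, symmDiff_singleton_of_not_mem hv]
    have hx' : Indep E (a.1.1 ∪ {v}) := by rw [hab']; exact b.1.2
    have h := label_const hcard hlf hs φ v a.1.1 a.1.2 hx' hv a.2
    have e1 : (mkC a.1.1 a.1.2 a.2 : ↥(Comp E s)) = a := compEq rfl
    have e2 : (mkC (a.1.1 ∪ {v}) hx' (comp_union_singleton v hv a.2) : ↥(Comp E s)) = b :=
      compEq hab'
    rw [e1, e2] at h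
    exact h

lemma photo_inverse {hcard : ∀ e ∈ E, 1 < e.card} {hlf : LocFin E} {hs : Indep E s}
    {hcard' : ∀ e ∈ E', 1 < e.card} {hlf' : LocFin E'} {ht : Indep E' t}
    (φ : GammaComp E s ≃g GammaComp E' t) (v : V) :
    flab hcard' hlf' ht φ.symm (flab hcard hlf hs φ v) = v := by
  have h1 := flab_spec hcard hlf hs φ v
  have h2 := edge_label hcard' hlf' ht φ.symm h1
  rw [RelIso.symm_apply_apply, RelIso.symm_apply_apply] at h2
  have h3 := xC_adj_yC hcard hlf hs v
  exact Set.singleton_eq_singleton_iff.mp (h2.symm.trans h3)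

lemma main_transfer_aux (hcard : ∀ e ∈ E, 1 < e.card) (hlf : LocFin E) (hs : Indep E s)
    (φ : GammaComp E s ≃g GammaComp E' t)
    (hinj : Function.Injective (flab hcard hlf hs φ)) (a : ↥(Comp E s)) :
    ∀ (z : Set V) (h1 : Indep E z) (h4 : (s ∆ z).Finite),
      (φ a).1.1 ∆ (φ (mkC z h1 h4)).1.1 = flab hcard hlf hs φ '' (a.1.1 ∆ z) := by
  intro z hz1 hz4
  set f := flab hcard hlf hs φ with hf
  set Q : Set V → Prop := fun u => Indep E u ∧ (s ∆ u).Finite with hQdef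
  have hfin : (a.1.1 ∆ z).Finite := by
    have h1 := symmDiff_triangle a.1.1 s z
    rw [symmDiff_comm a.1.1 s] at h1
    exact (a.2.union hz4).subset h1
  have hQ : ∀ u, a.1.1 ∩ z ⊆ u → (u ⊆ a.1.1 ∨ u ⊆ z) → Q u := by
    intro u h1 h2
    refine ⟨h2.elim (fun h => indep_mono a.1.2 h) (fun h => indep_mono hz1 h),
      (a.2.union hz4).subset (between_symmDiff h1 (h2.elim
        (fun h => h.trans Set.subset_union_left) (fun h => h.trans Set.subset_union_right)))⟩
  have hreach := reach (Q := Q) a.1.1 z hfin hQ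
  set P : Set V → Prop := fun u =>
    Q u ∧ ∀ (h1 : Indep E u) (h4 : (s ∆ u).Finite),
      (φ a).1.1 ∆ (φ (mkC u h1 h4)).1.1 = f '' (a.1.1 ∆ u) with hPdef
  have hQa : Q a.1.1 := ⟨a.1.2, a.2⟩
  have hPz : P z := by
    clear hz1 hz4 hfin hQ
    induction hreach with
    | refl =>
      refine ⟨hQa, ?_⟩
      intro h1 h4
      have e1 : (mkC a.1.1 h1 h4 : ↥(Comp E s)) = a := compEq rfl
      rw [e1, symmDiff_self, symmDiff_self]
      show (∅ : Set W) = f '' ∅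
      rw [Set.image_empty]
    | @tail b c hchain hstep ih =>
      obtain ⟨hQc, w, hc_eq⟩ := hstep
      obtain ⟨hQb, hPb⟩ := ih
      refine ⟨hQc, ?_⟩
      intro h1 h4
      have hbc : (mkC b hQb.1 hQb.2 : ↥(Comp E s)).1.1 ∆ (mkC c h1 h4 : ↥(Comp E s)).1.1
          = {w} := by
        show b ∆ c = {w}
        rw [hc_eq, symmDiff_symmDiff_cancel_left]
      have hedge := edge_label hcard hlf hs φ hbc
      have hPbv := hPb hQb.1 hQb.2
      calc (φ a).1.1 ∆ (φ (mkC c h1 h4)).1.1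
          = ((φ a).1.1 ∆ (φ (mkC b hQb.1 hQb.2)).1.1)
            ∆ ((φ (mkC b hQb.1 hQb.2)).1.1 ∆ (φ (mkC c h1 h4)).1.1) :=
            (symmDiff_chain _ _ _).symm
        _ = (f '' (a.1.1 ∆ b)) ∆ (f '' {w}) := by rw [hPbv, hedge, Set.image_singleton]
        _ = f '' ((a.1.1 ∆ b) ∆ {w}) := (Set.image_symmDiff hinj _ _).symm
        _ = f '' (a.1.1 ∆ c) := by rw [symmDiff_assoc, ← hc_eq]
  exact hPz.2 hz1 hz4

lemma main_transfer (hcard : ∀ e ∈ E, 1 < e.card) (hlf : LocFin E) (hs : Indep E s)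
    (φ : GammaComp E s ≃g GammaComp E' t)
    (hinj : Function.Injective (flab hcard hlf hs φ)) (a b : ↥(Comp E s)) :
    (φ a).1.1 ∆ (φ b).1.1 = flab hcard hlf hs φ '' (a.1.1 ∆ b.1.1) := by
  have h := main_transfer_aux hcard hlf hs φ hinj a b.1.1 b.1.2 b.2
  have e1 : (mkC b.1.1 b.1.2 b.2 : ↥(Comp E s)) = b := compEq rfl
  rwa [e1] at h

lemma symmDiff_eq_union_of_disj {α : Type*} {X Y : Set α} (h : ∀ z ∈ Y, z ∉ X) :
    X ∆ Y = X ∪ Y := by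
  ext z
  simp only [Set.mem_symmDiff, Set.mem_union]
  constructor
  · rintro (⟨h1, _⟩ | ⟨h1, _⟩)
    · exact Or.inl h1
    · exact Or.inr h1
  · rintro (h1 | h1)
    · exact Or.inl ⟨h1, fun hz => h z hz h1⟩
    · exact Or.inr ⟨h1, h z h1⟩

lemma symmDiff_diff_self' {α : Type*} (X Y : Set α) : X ∆ (X \ Y) = X ∩ Y := by
  ext z
  simp only [Set.mem_symmDiff, Set.mem_diff, Set.mem_inter_iff]
  tauto

lemma exists_comp_of_indep (hlf : LocFin E) (hs : Indep E s) (F : Finset V)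
    (hF : Indep E (F : Set V)) : ∃ a : ↥(Comp E s), (F : Set V) ⊆ a.1.1 := by
  classical
  set B : Set V := (F : Set V) ∪ ⋃ v ∈ F, {w | Nbr E v w} with hB
  have hBfin : B.Finite :=
    F.finite_toSet.union (Set.Finite.biUnion F.finite_toSet (fun v _ => nbr_finite hlf v))
  set X : Set V := (F : Set V) ∪ (s \ B) with hX
  have hXindep : Indep E X := by
    intro e he hsub
    by_cases hcap : ∃ v ∈ e, (v : V) ∈ F
    · obtain ⟨v, hve, hvF⟩ := hcap
      have hne : ¬ ((e : Set V) ⊆ (F : Set V)) := hF e he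
      rw [Set.not_subset] at hne
      obtain ⟨w, hwe, hwF⟩ := hne
      rcases hsub hwe with h1 | h1
      · exact hwF h1
      · exact h1.2 (Or.inr (Set.mem_biUnion hvF ⟨e, he, hve, Finset.mem_coe.mp hwe⟩))
    · refine hs e he (fun z hz => ?_)
      rcases hsub hz with h1 | h1
      · exact absurd ⟨z, Finset.mem_coe.mp hz, h1⟩ hcap
      · exact h1.1
  have hXcomp : (s ∆ X).Finite := by
    refine hBfin.subset ?_
    intro z hz
    rcases Set.mem_symmDiff.mp hz with ⟨h1, h2⟩ | ⟨h1, h2⟩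
    · by_contra hzB
      exact h2 (Or.inr ⟨h1, hzB⟩)
    · rcases h1 with h1 | h1
      · exact Or.inl h1
      · exact absurd h1.1 h2
  exact ⟨mkC X hXindep hXcomp, Set.subset_union_left⟩

lemma cube_of_exists (a' : ↥(Comp E s)) (F : Finset V) (hsub : (F : Set V) ⊆ a'.1.1) :
    ∃ a : ↥(Comp E s), ∀ S' : Finset V, S' ⊆ F → Indep E (a.1.1 ∆ (S' : Set V)) := by
  have hcomp : (s ∆ (a'.1.1 \ (F : Set V))).Finite := by
    have h1 := symmDiff_triangle s a'.1.1 (a'.1.1 \ (F : Set V))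
    rw [symmDiff_diff_self'] at h1
    exact (a'.2.union (F.finite_toSet.subset Set.inter_subset_right)).subset h1
  refine ⟨mkC (a'.1.1 \ (F : Set V)) (indep_mono a'.1.2 Set.diff_subset) hcomp, ?_⟩
  intro S' hS'
  have hdisj : ∀ z ∈ (S' : Set V), z ∉ a'.1.1 \ (F : Set V) :=
    fun z hz h => h.2 (Finset.coe_subset.mpr hS' hz)
  rw [mkC_val, symmDiff_eq_union_of_disj hdisj]
  exact indep_mono a'.1.2 (Set.union_subset Set.diff_subset
    ((Finset.coe_subset.mpr hS').trans hsub))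

lemma exists_of_cube (a : ↥(Comp E s)) (F : Finset V)
    (h : ∀ S' : Finset V, S' ⊆ F → Indep E (a.1.1 ∆ (S' : Set V))) :
    ∃ b : ↥(Comp E s), (F : Set V) ⊆ b.1.1 := by
  classical
  set S' : Finset V := F.filter (fun v => v ∉ a.1.1) with hS'
  have hS'sub : S' ⊆ F := Finset.filter_subset _ _
  have hind : Indep E (a.1.1 ∆ (S' : Set V)) := h S' hS'sub
  have hcomp : (s ∆ (a.1.1 ∆ (S' : Set V))).Finite := by
    have h1 := symmDiff_triangle s a.1.1 (a.1.1 ∆ (S' : Set V))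
    rw [symmDiff_symmDiff_cancel_left] at h1
    exact (a.2.union S'.finite_toSet).subset h1
  refine ⟨mkC _ hind hcomp, ?_⟩
  intro v hv
  rw [mkC_val]
  by_cases hva : v ∈ a.1.1
  · exact Set.mem_symmDiff.mpr (Or.inl ⟨hva, fun hz => by
      have := Finset.mem_filter.mp (Finset.mem_coe.mp hz)
      exact this.2 hva⟩)
  · exact Set.mem_symmDiff.mpr (Or.inr ⟨Finset.mem_coe.mpr
      (Finset.mem_filter.mpr ⟨Finset.mem_coe.mp hv, hva⟩), hva⟩)

lemma indep_transfer [DecidableEq W] (hcard : ∀ e ∈ E, 1 < e.card) (hlf : LocFin E) (hs : Indep E s)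
    (φ : GammaComp E s ≃g GammaComp E' t)
    (hinj : Function.Injective (flab hcard hlf hs φ)) (F : Finset V)
    (hF : Indep E (F : Set V)) :
    Indep E' ((F.image (flab hcard hlf hs φ) : Finset W) : Set W) := by
  classical
  set f := flab hcard hlf hs φ with hf
  obtain ⟨a', ha'⟩ := exists_comp_of_indep hlf hs F hF
  obtain ⟨a, ha⟩ := cube_of_exists a' F ha'
  have hcubeT : ∀ T' : Finset W, T' ⊆ F.image f → Indep E' ((φ a).1.1 ∆ (T' : Set W)) := by
    intro T' hT'
    set S' : Finset V := F.filter (fun v => f v ∈ T') with hS'def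
    have hS'sub : S' ⊆ F := Finset.filter_subset _ _
    have hTS : (T' : Set W) = f '' (S' : Set V) := by
      ext w
      constructor
      · intro hw
        obtain ⟨v, hvF, hvw⟩ := Finset.mem_image.mp (hT' (Finset.mem_coe.mp hw))
        exact ⟨v, Finset.mem_coe.mpr (Finset.mem_filter.mpr ⟨hvF, hvw ▸ Finset.mem_coe.mp hw⟩),
          hvw⟩
      · rintro ⟨v, hv, rfl⟩
        exact Finset.mem_coe.mpr (Finset.mem_filter.mp (Finset.mem_coe.mp hv)).2
    have hind : Indep E (a.1.1 ∆ (S' : Set V)) := ha S' hS'sub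
    have hcomp : (s ∆ (a.1.1 ∆ (S' : Set V))).Finite := by
      have h1 := symmDiff_triangle s a.1.1 (a.1.1 ∆ (S' : Set V))
      rw [symmDiff_symmDiff_cancel_left] at h1
      exact (a.2.union S'.finite_toSet).subset h1
    set c : ↥(Comp E s) := mkC _ hind hcomp with hc
    have h1 := main_transfer hcard hlf hs φ hinj a c
    have h2 : a.1.1 ∆ c.1.1 = (S' : Set V) := by
      show a.1.1 ∆ (a.1.1 ∆ (S' : Set V)) = (S' : Set V)
      rw [symmDiff_symmDiff_cancel_left]
    rw [h2, ← hTS] at h1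
    have h3 : (φ c).1.1 = (φ a).1.1 ∆ (T' : Set W) := eq_symmDiff_of_symmDiff_eq h1
    rw [← h3]
    exact (φ c).1.2
  obtain ⟨b, hb⟩ := exists_of_cube (φ a) (F.image f) hcubeT
  exact indep_mono b.1.2 hb

end Main

lemma edge_forward {V W : Type*} [DecidableEq V] [DecidableEq W]
    (E : Set (Finset V)) (E' : Set (Finset W)) (f : V → W) (g : W → V)
    (hgf : ∀ v, g (f v) = v) (hfg : ∀ w, f (g w) = w)
    (hsimpE : ∀ e ∈ E, ∀ e' ∈ E, e ⊆ e' → e = e')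
    (hsimpE' : ∀ e ∈ E', ∀ e'' ∈ E', e ⊆ e'' → e = e'')
    (ht1 : ∀ F : Finset V, Indep E (F : Set V) → Indep E' ((F.image f : Finset W) : Set W))
    (ht2 : ∀ G : Finset W, Indep E' (G : Set W) → Indep E ((G.image g : Finset V) : Set V))
    {e : Finset V} (he : e ∈ E) :
    ∃ e' ∈ E', (e' : Set W) = f '' (e : Set V) := by
  have hgfid : g ∘ f = id := funext hgf
  have hfgid : f ∘ g = id := funext hfg
  have himg : (e.image f).image g = e := by
    rw [Finset.image_image, hgfid, Finset.image_id]
  have hnotindep : ¬ Indep E' ((e.image f : Finset W) : Set W) := by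
    intro hI
    have h1 := ht2 (e.image f) hI
    rw [himg] at h1
    exact h1 e he subset_rfl
  rw [Indep] at hnotindep
  push_neg at hnotindep
  obtain ⟨e', he', hsub⟩ := hnotindep
  have hsubF : e' ⊆ e.image f := Finset.coe_subset.mp hsub
  by_cases heq : e' = e.image f
  · exact ⟨e', he', by rw [heq]; exact Finset.coe_image⟩
  · exfalso
    have hg_sub : e'.image g ⊆ e := by
      have h1 := Finset.image_subset_image (f := g) hsubF
      rwa [himg] at h1
    have hg_ne : e'.image g ≠ e := by
      intro hgeq
      apply heq
      have h1 : (e'.image g).image f = e.image f := by rw [hgeq]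
      rwa [Finset.image_image, hfgid, Finset.image_id] at h1
    have hss : e'.image g ⊂ e := lt_of_le_of_ne hg_sub hg_ne
    have hindep_sub : Indep E ((e'.image g : Finset V) : Set V) := by
      intro e'' he'' hsub''
      have h1 : e'' ⊆ e'.image g := Finset.coe_subset.mp hsub''
      have h2 : e'' = e := hsimpE e'' he'' e he (h1.trans hss.subset)
      rw [h2] at h1
      exact absurd (lt_of_le_of_lt h1 hss) (lt_irrefl e)
    have h3 := ht1 (e'.image g) hindep_sub
    rw [Finset.image_image, hfgid, Finset.image_id] at h3
    exact h3 e' he' subset_rfl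

theorem stmt7 {VS VT : Type*} (ES : Set (Finset VS)) (ET : Set (Finset VT))
    (hSsimp : SimpleHG ES) (hTsimp : SimpleHG ET) (hSlf : LocFin ES) (hTlf : LocFin ET)
    (s : Set VS) (t : Set VT) (hs : Indep ES s) (ht : Indep ET t)
    (h : Nonempty (GammaComp ES s ≃g GammaComp ET t)) :
    ∃ f : VS → VT, IsIsoHG ES ET f := by
  classical
  obtain ⟨φ⟩ := h
  set f := flab hSsimp.1 hSlf hs φ with hf
  set g := flab hTsimp.1 hTlf ht φ.symm with hg
  have hgf : ∀ v, g (f v) = v := fun v => photo_inverse φ v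
  have hfg : ∀ w, f (g w) = w := by
    intro w
    have h1 := photo_inverse (φ := φ.symm) (hcard := hTsimp.1) (hlf := hTlf) (hs := ht)
      (hcard' := hSsimp.1) (hlf' := hSlf) (ht := hs) w
    rw [show φ.symm.symm = φ from rfl] at h1
    exact h1
  have hfinj : Function.Injective f := Function.LeftInverse.injective hgf
  have hginj : Function.Injective g := Function.LeftInverse.injective hfg
  have ht1 : ∀ F : Finset VS, Indep ES (F : Set VS) →
      Indep ET ((F.image f : Finset VT) : Set VT) :=
    fun F hF => indep_transfer hSsimp.1 hSlf hs φ hfinj F hF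
  have ht2 : ∀ G : Finset VT, Indep ET (G : Set VT) →
      Indep ES ((G.image g : Finset VS) : Set VS) :=
    fun G hG => indep_transfer hTsimp.1 hTlf ht φ.symm hginj G hG
  refine ⟨f, Function.bijective_iff_has_inverse.mpr ⟨g, hgf, hfg⟩, ?_⟩
  intro e
  constructor
  · intro he
    exact edge_forward ES ET f g hgf hfg hSsimp.2 hTsimp.2 ht1 ht2 he
  · rintro ⟨e', he', hcoe⟩
    obtain ⟨e₀, he₀, hc₀⟩ := edge_forward ET ES g f hfg hgf hTsimp.2 hSsimp.2 ht2 ht1 he'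
    have hce : (e₀ : Set VS) = (e : Set VS) := by
      rw [hc₀, hcoe, ← Set.image_comp, show g ∘ f = id from funext hgf, Set.image_id]
    have he₀e : e₀ = e := Finset.coe_injective hce
    rwa [he₀e] at he₀
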